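/- For all real numbers $u, w$ and real $p \ge 2$, $\left| \frac{|u+w|^{p+1} - |u|^{p+1}}{p+1} - |u|^{p-1} u\, w \right| \le C(p) (1 + |u|^{p-1}) (|w|^{p+1} + |w|^2)$ for some constant $C(p)$ depending only on $p$. -/

import Mathlib

private lemma sq_rpow_half (x c : ℝ) : ((x ^ 2 : ℝ)) ^ (c / 2) = |x| ^ c := by
  rw [← sq_abs, ← Real.rpow_natCast |x| 2, ← Real.rpow_mul (abs_nonneg x)]
  congr 1
  push_cast
  ring

/-- Derivative of `g y = (y²)^((p-1)/2) * y = |y|^{p-1} y`. -/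
private lemma hasDerivAt_g (p : ℝ) (hp : 2 ≤ p) (x : ℝ) :
    HasDerivAt (fun y : ℝ => ((y ^ 2 : ℝ)) ^ ((p - 1) / 2) * y)
      (p * ((x ^ 2 : ℝ)) ^ ((p - 1) / 2)) x := by
  have hppos : (0:ℝ) < (p - 1) / 2 := by linarith
  rcases eq_or_ne x 0 with rfl | hx
  · have hzero : (((0:ℝ) ^ 2 : ℝ)) ^ ((p - 1) / 2) = 0 := by
      rw [show ((0:ℝ)^2 : ℝ) = 0 by ring, Real.zero_rpow (ne_of_gt hppos)]
    rw [hzero, mul_zero]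
    rw [hasDerivAt_iff_tendsto_slope]
    have hcont : ContinuousAt (fun y : ℝ => ((y ^ 2 : ℝ)) ^ ((p - 1) / 2)) 0 := by
      apply ContinuousAt.rpow_const
      · exact (continuous_pow 2).continuousAt
      · right; linarith
    have hlim : Filter.Tendsto (fun y : ℝ => ((y ^ 2 : ℝ)) ^ ((p - 1) / 2))
        (nhdsWithin 0 {(0:ℝ)}ᶜ) (nhds 0) := by
      have := hcont.tendsto
      rw [show (((0:ℝ) ^ 2 : ℝ)) ^ ((p - 1) / 2) = 0 from hzero] at this
      exact this.mono_left nhdsWithin_le_nhds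
    refine hlim.congr' ?_
    filter_upwards [self_mem_nhdsWithin] with y hy
    have hy0 : y ≠ 0 := hy
    rw [slope_def_field, hzero, zero_mul, sub_zero, sub_zero, mul_div_assoc,
      div_self hy0, mul_one]
  · have h1 : HasDerivAt (fun y : ℝ => ((y ^ 2 : ℝ)) ^ ((p - 1) / 2))
        ((2 * x ^ 1) * ((p - 1) / 2) * ((x ^ 2 : ℝ)) ^ ((p - 1) / 2 - 1)) x := by
      have := (hasDerivAt_pow 2 x).rpow_const (p := (p - 1)/2) (Or.inl (pow_ne_zero 2 hx))
      simpa using this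
    have h2 := h1.mul (hasDerivAt_id x)
    refine h2.congr_deriv (Eq.symm ?_)
    have hx2 : (x:ℝ) ^ 2 ≠ 0 := pow_ne_zero 2 hx
    have key : ((x ^ 2 : ℝ)) ^ ((p - 1) / 2) =
        ((x ^ 2 : ℝ)) ^ ((p - 1) / 2 - 1) * x ^ 2 := by
      nth_rewrite 1 [show (p-1)/2 = ((p-1)/2 - 1) + 1 by ring]
      rw [Real.rpow_add_one hx2]
    simp only [id]
    rw [key]
    ring

/-- Mean-value Lipschitz bound for `g`. -/
private lemma g_lip (p : ℝ) (hp : 2 ≤ p) (M a b : ℝ) (ha : |a| ≤ M) (hb : |b| ≤ M) :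
    |((a ^ 2 : ℝ)) ^ ((p - 1) / 2) * a - ((b ^ 2 : ℝ)) ^ ((p - 1) / 2) * b| ≤
      p * M ^ (p - 1) * |a - b| := by
  have hMnn : (0:ℝ) ≤ M := le_trans (abs_nonneg a) ha
  have hmv := (convex_Icc (-M) M).norm_image_sub_le_of_norm_hasDerivWithin_le
    (f := fun y : ℝ => ((y ^ 2 : ℝ)) ^ ((p - 1) / 2) * y)
    (f' := fun y : ℝ => p * ((y ^ 2 : ℝ)) ^ ((p - 1) / 2))
    (fun y _ => (hasDerivAt_g p hp y).hasDerivWithinAt)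
    (fun y hy => by
      have hyM : |y| ≤ M := abs_le.2 ⟨hy.1, hy.2⟩
      simp only [Real.norm_eq_abs]
      rw [sq_rpow_half y (p - 1)]
      rw [abs_mul, abs_of_nonneg (by linarith : (0:ℝ) ≤ p),
        abs_of_nonneg (Real.rpow_nonneg (abs_nonneg y) _)]
      exact mul_le_mul_of_nonneg_left
        (Real.rpow_le_rpow (abs_nonneg y) hyM (by linarith)) (by linarith))
    (abs_le.1 hb) (abs_le.1 ha)
  simpa [Real.norm_eq_abs] using hmv

theorem stmt_4 (p : ℝ) (hp : 2 ≤ p) :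
    ∃ C > (0:ℝ), ∀ u w : ℝ,
      |(|u + w| ^ (p + 1) - |u| ^ (p + 1)) / (p + 1) - |u| ^ (p - 1) * u * w| ≤
        C * (1 + |u| ^ (p - 1)) * (|w| ^ (p + 1) + |w| ^ 2) := by
  have hp0 : (0:ℝ) < p := by linarith
  have hp1 : (0:ℝ) < p + 1 := by linarith
  have hT : (0:ℝ) < 2 ^ (p - 1) := Real.rpow_pos_of_pos two_pos _
  refine ⟨p * 2 ^ (p - 1), mul_pos hp0 hT, fun u w => ?_⟩
  set M := |u| + |w| with hM
  have hMnn : (0:ℝ) ≤ M := by positivity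
  set gu : ℝ := ((u ^ 2 : ℝ)) ^ ((p - 1) / 2) * u with hgu
  set φ : ℝ → ℝ := fun y => ((y ^ 2 : ℝ)) ^ ((p + 1) / 2) / (p + 1) - gu * y with hφ
  have hφ' : ∀ y : ℝ, HasDerivAt φ (((y ^ 2 : ℝ)) ^ ((p - 1) / 2) * y - gu) y := by
    intro y
    have hF : HasDerivAt (fun y : ℝ => ((y ^ 2 : ℝ)) ^ ((p + 1) / 2))
        ((p + 1) * (((y ^ 2 : ℝ)) ^ ((p - 1) / 2) * y)) y := by
      have h := (hasDerivAt_pow 2 y).rpow_const (p := (p + 1) / 2) (Or.inr (by linarith))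
      convert h using 1
      rw [show (p + 1) / 2 - 1 = (p - 1) / 2 by ring]
      push_cast
      ring
    have h2 := (hF.div_const (p + 1)).sub ((hasDerivAt_id y).const_mul gu)
    refine h2.congr_deriv (Eq.symm ?_)
    rw [mul_div_cancel_left₀ _ (ne_of_gt hp1), mul_one]
  have hbound : ∀ y ∈ segment ℝ u (u + w),
      ‖((y ^ 2 : ℝ)) ^ ((p - 1) / 2) * y - gu‖ ≤ p * M ^ (p - 1) * |w| := by
    rintro y ⟨a, b, ha, hb, hab, rfl⟩
    set y := a • u + b • (u + w)
    have hyu : y - u = b * w := by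
      simp only [y, smul_eq_mul]; linear_combination u * hab
    have hyuw : |y - u| ≤ |w| := by
      rw [hyu, abs_mul, abs_of_nonneg hb]
      calc b * |w| ≤ 1 * |w| :=
            mul_le_mul_of_nonneg_right (by linarith) (abs_nonneg w)
        _ = |w| := one_mul _
    have hyM : |y| ≤ M := by
      calc |y| = |u + (y - u)| := by ring_nf
        _ ≤ |u| + |y - u| := abs_add_le _ _
        _ ≤ |u| + |w| := by linarith
    rw [Real.norm_eq_abs]
    calc |((y ^ 2 : ℝ)) ^ ((p - 1) / 2) * y - gu| ≤ p * M ^ (p - 1) * |y - u| :=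
          g_lip p hp M y u hyM (le_add_of_nonneg_right (abs_nonneg w))
      _ ≤ p * M ^ (p - 1) * |w| :=
          mul_le_mul_of_nonneg_left hyuw
            (mul_nonneg hp0.le (Real.rpow_nonneg hMnn _))
  have hmv := (convex_segment u (u + w)).norm_image_sub_le_of_norm_hasDerivWithin_le
    (fun y _ => (hφ' y).hasDerivWithinAt) hbound
    (left_mem_segment ℝ u (u + w)) (right_mem_segment ℝ u (u + w))
  rw [show u + w - u = w by ring] at hmv
  have hEq : φ (u + w) - φ u =
      (|u + w| ^ (p + 1) - |u| ^ (p + 1)) / (p + 1) - |u| ^ (p - 1) * u * w := by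
    simp only [hφ, hgu]
    rw [sq_rpow_half (u + w) (p + 1), sq_rpow_half u (p + 1), sq_rpow_half u (p - 1)]
    ring
  rw [hEq, Real.norm_eq_abs, Real.norm_eq_abs] at hmv
  -- Final arithmetic
  have hA : (0:ℝ) ≤ |u| ^ (p - 1) := Real.rpow_nonneg (abs_nonneg u) _
  have hB : (0:ℝ) ≤ |w| ^ (p - 1) := Real.rpow_nonneg (abs_nonneg w) _
  have hW : (0:ℝ) ≤ |w| ^ (p + 1) := Real.rpow_nonneg (abs_nonneg w) _
  have hW2 : (0:ℝ) ≤ |w| ^ 2 := sq_nonneg _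
  have hBW : |w| ^ (p - 1) * |w| ^ 2 = |w| ^ (p + 1) := by
    rcases eq_or_ne w 0 with rfl | hw0
    · rw [abs_zero, Real.zero_rpow (by linarith : p - 1 ≠ 0),
        Real.zero_rpow (by linarith : p + 1 ≠ 0), zero_mul]
    · rw [← Real.rpow_natCast |w| 2, ← Real.rpow_add (abs_pos.2 hw0)]
      congr 1
      push_cast
      ring
  have h2 : M ^ (p - 1) ≤ 2 ^ (p - 1) * (|u| ^ (p - 1) + |w| ^ (p - 1)) := by
    have hmaxnn : (0:ℝ) ≤ max |u| |w| := le_max_of_le_left (abs_nonneg u)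
    have hmax : M ≤ 2 * max |u| |w| := by
      rcases le_total |u| |w| with h | h
      · rw [max_eq_right h]; simp only [hM]; linarith
      · rw [max_eq_left h]; simp only [hM]; linarith
    calc M ^ (p - 1) ≤ (2 * max |u| |w|) ^ (p - 1) :=
          Real.rpow_le_rpow hMnn hmax (by linarith)
      _ = 2 ^ (p - 1) * (max |u| |w|) ^ (p - 1) :=
          Real.mul_rpow (by norm_num) hmaxnn
      _ ≤ 2 ^ (p - 1) * (|u| ^ (p - 1) + |w| ^ (p - 1)) := by
          refine mul_le_mul_of_nonneg_left ?_ hT.le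
          rcases max_cases |u| |w| with ⟨h, _⟩ | ⟨h, _⟩ <;> rw [h] <;> linarith
  calc |(|u + w| ^ (p + 1) - |u| ^ (p + 1)) / (p + 1) - |u| ^ (p - 1) * u * w| ≤
        p * M ^ (p - 1) * |w| * |w| := hmv
    _ = p * M ^ (p - 1) * |w| ^ 2 := by ring
    _ ≤ p * (2 ^ (p - 1) * (|u| ^ (p - 1) + |w| ^ (p - 1))) * |w| ^ 2 :=
        mul_le_mul_of_nonneg_right (mul_le_mul_of_nonneg_left h2 hp0.le) hW2
    _ = p * 2 ^ (p - 1) * (|u| ^ (p - 1) * |w| ^ 2)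
          + p * 2 ^ (p - 1) * (|w| ^ (p - 1) * |w| ^ 2) := by ring
    _ = p * 2 ^ (p - 1) * (|u| ^ (p - 1) * |w| ^ 2)
          + p * 2 ^ (p - 1) * |w| ^ (p + 1) := by rw [hBW]
    _ ≤ p * 2 ^ (p - 1) * (1 + |u| ^ (p - 1)) * (|w| ^ (p + 1) + |w| ^ 2) := by
        nlinarith [mul_nonneg (mul_nonneg (mul_nonneg hp0.le hT.le) hA) hW,
          mul_nonneg (mul_nonneg hp0.le hT.le) hW2]
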